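/- Let k be an algebraically closed field and let D be a division ring which is a k-algebra whose dimension as a k-vector space is strictly less than the cardinality of k. Then D = k, i.e., the structure map k → D is surjective. -/

import Mathlib

open Polynomial

/-- Division-ring version of `Transcendental.linearIndependent_sub_inv`. -/
theorem transcendental_linearIndependent_sub_inv'
    {F E : Type*} [Field F] [DivisionRing E] [Algebra F E] {x : E} (H : Transcendental F x) :
    LinearIndependent F fun a ↦ (x - algebraMap F E a)⁻¹ := by
  classical
  rw [transcendental_iff] at H
  refine linearIndependent_iff'.2 fun s m hm i hi ↦ ?_
  have hnz (a : F) : x - algebraMap F E a ≠ 0 := fun h ↦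
    X_sub_C_ne_zero a <| H (X - C a) (by simp [h])
  let b : E := aeval x (s.prod fun j ↦ (X : F[X]) - C j)
  have h1 : ∀ i ∈ s, m i • (b * (x - algebraMap F E i)⁻¹) =
      m i • aeval x ((s.erase i).prod fun j ↦ (X : F[X]) - C j) := fun i hi ↦ by
    have : b = aeval x (((s.erase i).prod fun j ↦ (X : F[X]) - C j) * (X - C i)) := by
      rw [s.prod_erase_mul _ hi]
    rw [this, map_mul, map_sub, aeval_X, aeval_C, mul_inv_cancel_right₀ (hnz i)]
  replace hm := congr(b * $(hm))
  simp_rw [mul_zero, Finset.mul_sum, mul_smul_comm, Finset.sum_congr rfl h1] at hm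
  let p : Polynomial F := s.sum fun i ↦ .C (m i) * (s.erase i).prod fun j ↦ .X - .C j
  replace hm := congr(Polynomial.aeval i $(H p (by
    simp_rw [← hm, p, map_sum, map_mul, aeval_C, Algebra.smul_def])))
  have h2 : ∀ j ∈ s.erase i, m j * ((s.erase j).prod fun x ↦ i - x) = 0 := fun j hj ↦ by
    have := Finset.mem_erase_of_ne_of_mem (Finset.ne_of_mem_erase hj).symm hi
    simp_rw [← (s.erase j).prod_erase_mul _ this, sub_self, mul_zero]
  simp_rw [map_zero, p, map_sum, map_mul, map_prod, map_sub, aeval_X,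
    aeval_C, Algebra.algebraMap_self_apply, ← s.sum_erase_add _ hi,
    Finset.sum_eq_zero h2, zero_add] at hm
  exact eq_zero_of_ne_zero_of_mul_right_eq_zero (Finset.prod_ne_zero_iff.2 fun j hj ↦
    sub_ne_zero.2 (Finset.ne_of_mem_erase hj).symm) hm

/-- Let `k` be an algebraically closed field and `D` a division ring which is a `k`-algebra
whose dimension as a `k`-vector space is strictly less than the cardinality of `k`.
Then `D = k`, i.e., the structure map `k → D` is surjective. -/
theorem divisionRing_eq_of_rank_lt_card (k : Type u) (D : Type v) [Field k] [IsAlgClosed k]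
    [DivisionRing D] [Algebra k D]
    (h : Cardinal.lift.{u} (Module.rank k D) < Cardinal.lift.{v} (Cardinal.mk k)) :
    Function.Surjective (algebraMap k D) := by
  have hint : ∀ x : D, IsIntegral k x := by
    intro x
    by_contra hx
    have htr : Transcendental k x := fun halg ↦ hx (isAlgebraic_iff_isIntegral.mp halg)
    have := (transcendental_linearIndependent_sub_inv' htr).cardinal_lift_le_rank
    exact absurd (this.trans_lt h) (lt_irrefl _)
  have : Algebra.IsIntegral k D := ⟨hint⟩
  exact IsAlgClosed.algebraMap_bijective_of_isIntegral.2
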